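/- If an infinite word ω over a finite alphabet is C-balanced for some natural number C, then the frequency of each letter in ω exists, i.e., for each letter i the limit of |ω_{[0,n)}|_i / n as n → ∞ exists. -/

import Mathlib

def prefixW {A : Type*} (w : ℕ → A) (n : ℕ) : List A := (List.range n).map w

def IsFactor {A : Type*} (w : ℕ → A) (u : List A) : Prop :=
  ∃ k, u = (List.range u.length).map (fun t => w (k + t))

def applySub {A : Type*} (σ : A → List A) (w : List A) : List A := w.flatMap σ

def SubstOfInf {A : Type*} (σ : A → List A) (w' w : ℕ → A) : Prop :=
  ∀ m, prefixW w (applySub σ (prefixW w' m)).length = applySub σ (prefixW w' m)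

def FactorOfImage {A : Type*} (σ : A → List A) (ω : ℕ → A) (u : List A) : Prop :=
  ∃ w, IsFactor ω w ∧ u <:+: applySub σ w

def BalancedWord {A : Type*} [DecidableEq A] (C : ℕ) (w : ℕ → A) : Prop :=
  ∀ u v, IsFactor w u → IsFactor w v → u.length = v.length →
    ∀ i, |(u.count i : ℤ) - (v.count i : ℤ)| ≤ (C : ℤ)

lemma prefix_split {A : Type*} (ω : ℕ → A) (m n : ℕ) :
    prefixW ω (m + n) = prefixW ω m ++ (List.range n).map (fun t => ω (m + t)) := by
  simp [prefixW, List.range_add, Function.comp, add_comm]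

theorem stmt0 {A : Type*} [Fintype A] [DecidableEq A] (ω : ℕ → A) (C : ℕ)
    (hbal : BalancedWord C ω) :
    ∀ i : A, ∃ f : ℝ, Filter.Tendsto
      (fun n => (((prefixW ω n).count i : ℝ) / (n : ℝ))) Filter.atTop (nhds f) := by
  intro i
  set a : ℕ → ℕ := fun n => (prefixW ω n).count i with ha
  have key : ∀ m n, (a (m + n) : ℤ) ≤ a m + a n + C := by
    intro m n
    have hsplit := prefix_split ω m n
    have hcount : a (m + n) = a m + ((List.range n).map (fun t => ω (m + t))).count i := by
      rw [ha]; simp [hsplit]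
    have hfac1 : IsFactor ω ((List.range n).map (fun t => ω (m + t))) := by
      exact ⟨m, by simp⟩
    have hfac2 : IsFactor ω (prefixW ω n) := by
      exact ⟨0, by simp [prefixW]⟩
    have hlen : ((List.range n).map (fun t => ω (m + t))).length = (prefixW ω n).length := by
      simp [prefixW]
    have hb := hbal _ _ hfac1 hfac2 hlen i
    have h1 := abs_le.mp hb
    have han : a n = (prefixW ω n).count i := rfl
    rw [hcount, han]
    push_cast
    omega
  set u : ℕ → ℝ := fun n => (a n : ℝ) + C with hu
  have hsub : Subadditive u := by
    intro m n
    have := key m n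
    have : (a (m+n) : ℝ) ≤ a m + a n + C := by exact_mod_cast this
    simp only [hu]
    linarith
  have hbdd : BddBelow (Set.range fun n => u n / n) := by
    refine ⟨0, ?_⟩
    rintro x ⟨n, rfl⟩
    apply div_nonneg
    · have : (0:ℝ) ≤ (a n : ℝ) := by positivity
      simp only [hu]; positivity
    · positivity
  have hlim := hsub.tendsto_lim hbdd
  refine ⟨hsub.lim, ?_⟩
  have h2 : Filter.Tendsto (fun n : ℕ => (C : ℝ) / n) Filter.atTop (nhds 0) :=
    tendsto_const_div_atTop_nhds_zero_nat _
  have := hlim.sub h2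
  rw [sub_zero] at this
  refine this.congr' ?_
  filter_upwards [Filter.eventually_gt_atTop 0] with n hn
  have hn' : (n:ℝ) ≠ 0 := by positivity
  field_simp [hu]
  simp [hu, ha]
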